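/- In the max-plus algebra, for any matrix M ∈ ℝmax^{n×n}: there exists a vector x ∈ ℝ^n (all entries finite) with M ⊗ x ⪯ x if and only if the precedence graph G(M) has no circuit of positive weight. -/

import Mathlib

noncomputable section

/-- Max-plus matrix–vector product `(M ⊗ x)_i = max_j (M_{ij} + x_j)`. -/
def mpVec {ι : Type*} (M : Matrix ι ι EReal) (x : ι → ℝ) : ι → EReal :=
  fun i => ⨆ j, M i j + (x j : EReal)

/-- Successive nodes of a path in the precedence graph `G(M)`. -/
def IsPath {n : ℕ} (M : Matrix (Fin n) (Fin n) EReal) (r : ℕ) (p : Fin (r + 1) → Fin n) :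
    Prop := ∀ t : Fin r, M (p t.castSucc) (p t.succ) ≠ ⊥

/-- The weight of a path in `G(M)`. -/
def pathWeight {n : ℕ} (M : Matrix (Fin n) (Fin n) EReal) (r : ℕ)
    (p : Fin (r + 1) → Fin n) : EReal := ∑ t : Fin r, M (p t.castSucc) (p t.succ)

/-- `G(M)` contains no circuit of positive weight. -/
def NoPosCircuit {n : ℕ} (M : Matrix (Fin n) (Fin n) EReal) : Prop :=
  ∀ (r : ℕ), 1 ≤ r → ∀ p : Fin (r + 1) → Fin n,
    IsPath M r p → p 0 = p (Fin.last r) → pathWeight M r p ≤ 0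

namespace MaxPlusAux

variable {n : ℕ}

/-- ℕ-indexed path predicate. -/
def P (M : Matrix (Fin n) (Fin n) EReal) (r : ℕ) (p : ℕ → Fin n) : Prop :=
  ∀ t < r, M (p t) (p (t + 1)) ≠ ⊥

/-- ℕ-indexed path weight. -/
def W (M : Matrix (Fin n) (Fin n) EReal) (r : ℕ) (p : ℕ → Fin n) : EReal :=
  ∑ t ∈ Finset.range r, M (p t) (p (t + 1))

/-- Bellman iteration. -/
def g (M : Matrix (Fin n) (Fin n) EReal) : ℕ → Fin n → EReal
  | 0 => fun _ => 0
  | k + 1 => fun i => max (g M k i) (⨆ j, M i j + g M k j)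

lemma g_nonneg (M : Matrix (Fin n) (Fin n) EReal) : ∀ k i, 0 ≤ g M k i := by
  intro k
  induction k with
  | zero => intro i; exact le_refl _
  | succ k IH => intro i; exact (IH i).trans (le_max_left _ _)

lemma g_ne_bot (M : Matrix (Fin n) (Fin n) EReal) (k : ℕ) (i : Fin n) : g M k i ≠ ⊥ :=
  fun h => by simpa [h] using g_nonneg M k i

lemma g_ne_top (M : Matrix (Fin n) (Fin n) EReal) (hM : ∀ a b, M a b ≠ ⊤) :
    ∀ k i, g M k i ≠ ⊤ := by
  intro k
  induction k with
  | zero => intro i; exact EReal.zero_ne_top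
  | succ k IH =>
    intro i
    have h1 : g M k i < ⊤ := (IH i).lt_top
    have h2 : (⨆ j, M i j + g M k j) < ⊤ := by
      have : Nonempty (Fin n) := ⟨i⟩
      obtain ⟨j0, hj0⟩ := Finite.exists_max (fun j => M i j + g M k j)
      calc (⨆ j, M i j + g M k j) ≤ M i j0 + g M k j0 := iSup_le hj0
        _ < ⊤ := EReal.add_lt_top (hM i j0) (IH j0)
    exact (max_lt h1 h2).ne

/-- Any short path weight is bounded by the Bellman value. -/
lemma W_le_g (M : Matrix (Fin n) (Fin n) EReal) :
    ∀ k r (p : ℕ → Fin n), P M r p → r ≤ k → W M r p ≤ g M k (p 0) := by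
  intro k
  induction k with
  | zero =>
    intro r p _ hr
    obtain rfl : r = 0 := Nat.le_zero.mp hr
    simp [W, g]
  | succ k IH =>
    intro r p hp hr
    cases r with
    | zero =>
      have : W M 0 p = 0 := by simp [W]
      rw [this]; exact g_nonneg M _ _
    | succ s =>
      have hsplit : W M (s + 1) p
          = M (p 0) (p 1) + W M s (fun t => p (t + 1)) := by
        rw [W, Finset.sum_range_succ']
        exact add_comm _ _
      have hq : P M s (fun t => p (t + 1)) := by
        intro t ht
        exact hp (t + 1) (by omega)
      have h1 : W M s (fun t => p (t + 1)) ≤ g M k (p 1) :=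
        IH s (fun t => p (t + 1)) hq (by omega)
      calc W M (s + 1) p = M (p 0) (p 1) + W M s (fun t => p (t + 1)) := hsplit
        _ ≤ M (p 0) (p 1) + g M k (p 1) := add_le_add_right h1 _
        _ ≤ ⨆ j, M (p 0) j + g M k j := le_iSup (fun j => M (p 0) j + g M k j) (p 1)
        _ ≤ g M (k + 1) (p 0) := le_max_right _ _

/-- The Bellman value is attained by some path of length at most `k`. -/
lemma exists_W_eq (M : Matrix (Fin n) (Fin n) EReal) :
    ∀ k (i : Fin n), ∃ r, r ≤ k ∧ ∃ p : ℕ → Fin n,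
      P M r p ∧ p 0 = i ∧ g M k i = W M r p := by
  intro k
  induction k with
  | zero =>
    intro i
    exact ⟨0, le_refl _, fun _ => i, fun t ht => absurd ht (by omega), rfl, by simp [W, g]⟩
  | succ k IH =>
    intro i
    by_cases hBA : (⨆ j, M i j + g M k j) ≤ g M k i
    · obtain ⟨r, hr, p, hP, hp0, heq⟩ := IH i
      refine ⟨r, hr.trans (Nat.le_succ k), p, hP, hp0, ?_⟩
      rw [show g M (k + 1) i = max (g M k i) (⨆ j, M i j + g M k j) from rfl,
        max_eq_left hBA, heq]
    · push_neg at hBA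
      have : Nonempty (Fin n) := ⟨i⟩
      obtain ⟨j0, hj0⟩ := Finite.exists_max (fun j => M i j + g M k j)
      have hB : (⨆ j, M i j + g M k j) = M i j0 + g M k j0 :=
        le_antisymm (iSup_le hj0) (le_iSup (fun j => M i j + g M k j) j0)
      have hval : g M (k + 1) i = M i j0 + g M k j0 := by
        rw [show g M (k + 1) i = max (g M k i) (⨆ j, M i j + g M k j) from rfl,
          max_eq_right hBA.le, hB]
      have hMi : M i j0 ≠ ⊥ := by
        intro hbot
        rw [hbot, EReal.bot_add] at hB
        have : (0 : EReal) < ⊥ := lt_of_le_of_lt (g_nonneg M k i) (hB ▸ hBA)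
        exact absurd this (by simp)
      obtain ⟨r, hr, p, hP, hp0, heq⟩ := IH j0
      set q : ℕ → Fin n := fun t => Nat.casesOn t i (fun s => p s) with hqdef
      have hWq : W M (r + 1) q = M i j0 + W M r p := by
        rw [W, Finset.sum_range_succ']
        show (∑ k ∈ Finset.range r, M (p k) (p (k + 1))) + M i (p 0)
          = M i j0 + W M r p
        rw [hp0]
        exact add_comm _ _
      refine ⟨r + 1, by omega, q, ?_, rfl, ?_⟩
      · intro t ht
        cases t with
        | zero => show M i (p 0) ≠ ⊥; rw [hp0]; exact hMi
        | succ s => exact hP s (by omega)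
      · rw [hval, heq, hWq]

/-- Key lemma: assuming no positive circuits (ℕ-version), every path weight is
bounded by the `n`-th Bellman value. -/
lemma W_le_g_n (M : Matrix (Fin n) (Fin n) EReal)
    (hC : ∀ r, 1 ≤ r → ∀ p : ℕ → Fin n, P M r p → p 0 = p r → W M r p ≤ 0) :
    ∀ r (p : ℕ → Fin n), P M r p → W M r p ≤ g M n (p 0) := by
  intro r
  induction r using Nat.strong_induction_on with
  | _ r IH =>
    intro p hp
    by_cases hrn : r ≤ n
    · exact W_le_g M n r p hp hrn
    push_neg at hrn
    -- pigeonhole: p repeats a value on {0, ..., n}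
    obtain ⟨a, b, hab, hbn, hpab⟩ :
        ∃ a b : ℕ, a < b ∧ b ≤ n ∧ p a = p b := by
      have hcard : (Finset.univ : Finset (Fin n)).card < (Finset.range (n + 1)).card := by
        simp
      obtain ⟨a, ha, b, hb, hne, heq⟩ :=
        Finset.exists_ne_map_eq_of_card_lt_of_maps_to hcard
          (fun a _ => Finset.mem_univ (p a))
      rw [Finset.mem_range] at ha hb
      rcases Nat.lt_or_ge a b with h | h
      · exact ⟨a, b, h, by omega, heq⟩
      · exact ⟨b, a, by omega, by omega, heq.symm⟩
    set d := b - a with hd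
    have hd1 : 1 ≤ d := by omega
    have hbr : b ≤ r := by omega
    have hadb : a + d = b := by omega
    set p' : ℕ → Fin n := fun t => if t < a then p t else p (t + d) with hp'
    have hp'le : ∀ t ≤ a, p' t = p t := by
      intro t ht
      rcases Nat.lt_or_ge t a with h | h
      · simp [hp', h]
      · have hta : t = a := by omega
        subst hta
        show (if t < t then p t else p (t + d)) = p t
        rw [if_neg (lt_irrefl t), hadb, ← hpab]
    have hp'ge : ∀ t, a ≤ t → p' t = p (t + d) := by
      intro t ht
      simp [hp', Nat.not_lt.mpr ht]
    set f : ℕ → EReal := fun t => M (p t) (p (t + 1)) with hf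
    set f' : ℕ → EReal := fun t => M (p' t) (p' (t + 1)) with hf'
    have hflt : ∀ t < a, f' t = f t := by
      intro t ht
      simp only [hf', hf]
      rw [hp'le t (by omega), hp'le (t + 1) (by omega)]
    have hfge : ∀ t, a ≤ t → f' t = f (t + d) := by
      intro t ht
      simp only [hf', hf]
      rw [hp'ge t ht, hp'ge (t + 1) (by omega)]
      congr 2
      omega
    have har' : a ≤ r - d := by omega
    have hdr : d ≤ r := by omega
    -- split W r p
    have hsplit1 : W M r p = (∑ t ∈ Finset.range a, f t)
        + (∑ t ∈ Finset.Ico a b, f t) + (∑ t ∈ Finset.Ico b r, f t) := by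
      rw [W, ← hf, Finset.range_eq_Ico,
        ← Finset.sum_Ico_consecutive f (Nat.zero_le b) hbr,
        ← Finset.sum_Ico_consecutive f (Nat.zero_le a) hab.le,
        ← Finset.range_eq_Ico]
    -- split W (r - d) p'
    have hsplit2 : W M (r - d) p' = (∑ t ∈ Finset.range a, f t)
        + (∑ t ∈ Finset.Ico b r, f t) := by
      rw [W, ← hf', Finset.range_eq_Ico,
        ← Finset.sum_Ico_consecutive f' (Nat.zero_le a) har',
        ← Finset.range_eq_Ico]
      congr 1
      · exact Finset.sum_congr rfl fun t ht => hflt t (Finset.mem_range.mp ht)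
      · rw [Finset.sum_Ico_eq_sum_range, Finset.sum_Ico_eq_sum_range]
        have hlen : r - d - a = r - b := by omega
        rw [hlen]
        refine Finset.sum_congr rfl fun t _ => ?_
        rw [hfge (a + t) (by omega)]
        congr 1
        omega
    -- the removed circuit
    have hcirc : (∑ t ∈ Finset.Ico a b, f t) ≤ 0 := by
      have hq : ∑ t ∈ Finset.Ico a b, f t = W M d (fun t => p (a + t)) := by
        rw [W, Finset.sum_Ico_eq_sum_range]
        refine Finset.sum_congr (by rw [hd]) fun t _ => ?_
        simp only [hf]
        rfl
      rw [hq]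
      refine hC d hd1 _ (fun t ht => hp (a + t) (by omega)) ?_
      show p (a + 0) = p (a + d)
      rw [Nat.add_zero, hadb]
      exact hpab
    have hWW : W M r p ≤ W M (r - d) p' := by
      rw [hsplit1, hsplit2]
      calc (∑ t ∈ Finset.range a, f t) + (∑ t ∈ Finset.Ico a b, f t)
            + (∑ t ∈ Finset.Ico b r, f t)
          ≤ (∑ t ∈ Finset.range a, f t) + 0 + (∑ t ∈ Finset.Ico b r, f t) := by
            refine add_le_add_left (add_le_add_right hcirc _) _
        _ = (∑ t ∈ Finset.range a, f t) + (∑ t ∈ Finset.Ico b r, f t) := by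
            rw [add_zero]
    have hP' : P M (r - d) p' := by
      intro t ht
      rcases Nat.lt_or_ge t a with h | h
      · have : f' t ≠ ⊥ := by rw [hflt t h]; exact hp t (by omega)
        exact this
      · have : f' t ≠ ⊥ := by rw [hfge t h]; exact hp (t + d) (by omega)
        exact this
    have h0 : p' 0 = p 0 := hp'le 0 (Nat.zero_le a)
    calc W M r p ≤ W M (r - d) p' := hWW
      _ ≤ g M n (p' 0) := IH (r - d) (by omega) p' hP'
      _ = g M n (p 0) := by rw [h0]

/-- Bridge: `NoPosCircuit` implies the ℕ-indexed no-positive-circuit property. -/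
lemma natNoPos (M : Matrix (Fin n) (Fin n) EReal) (h : NoPosCircuit M) :
    ∀ r, 1 ≤ r → ∀ p : ℕ → Fin n, P M r p → p 0 = p r → W M r p ≤ 0 := by
  intro r hr p hP hpc
  set q : Fin (r + 1) → Fin n := fun t => p t.val with hq
  have hpath : IsPath M r q := by
    intro t
    simpa [hq, Fin.coe_castSucc, Fin.val_succ] using hP t.val t.isLt
  have hW : pathWeight M r q = W M r p := by
    rw [pathWeight, W]
    rw [← Fin.sum_univ_eq_sum_range (fun t => M (p t) (p (t + 1))) r]
    exact Finset.sum_congr rfl fun t _ => by simp [hq, Fin.coe_castSucc, Fin.val_succ]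
  have := h r hr q hpath (by simp [hq, Fin.val_last, Fin.val_zero, hpc])
  rwa [hW] at this

end MaxPlusAux

/-- there is a finite potential `x ∈ ℝⁿ` with `M ⊗ x ⪯ x` iff the
precedence graph `G(M)` has no circuit of positive weight. -/
theorem finite_potential_iff_noPosCircuit {n : ℕ} (M : Matrix (Fin n) (Fin n) EReal)
    (hM : ∀ a b, M a b ≠ ⊤) :
    (∃ x : Fin n → ℝ, ∀ i, mpVec M x i ≤ (x i : EReal)) ↔ NoPosCircuit M := by
  constructor
  · rintro ⟨x, hx⟩ r hr p hpath hcirc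
    -- each arc weight is at most the potential difference
    have harc : ∀ t : Fin r, M (p t.castSucc) (p t.succ)
        ≤ ((x (p t.castSucc) - x (p t.succ) : ℝ) : EReal) := by
      intro t
      set i := p t.castSucc
      set j := p t.succ
      have h1 : M i j + (x j : EReal) ≤ (x i : EReal) :=
        le_trans (le_iSup (fun j' => M i j' + (x j' : EReal)) j) (hx i)
      have h2 : M i j + (x j : EReal) ≤ ((x i - x j : ℝ) : EReal) + (x j : EReal) := by
        rw [← EReal.coe_add, sub_add_cancel]
        exact h1
      exact ((EReal.addLECancellable_coe (x j)).add_le_add_iff_right).mp h2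
    set G : ℕ → ℝ := fun t => x (p ⟨min t r, by omega⟩) with hG
    have hsum : pathWeight M r p
        ≤ ((∑ t ∈ Finset.range r, (G t - G (t + 1)) : ℝ) : EReal) := by
      have hcast : ((∑ t ∈ Finset.range r, (G t - G (t + 1)) : ℝ) : EReal)
          = ∑ t ∈ Finset.range r, ((G t - G (t + 1) : ℝ) : EReal) :=
        map_sum (⟨⟨Real.toEReal, EReal.coe_zero⟩, EReal.coe_add⟩ : ℝ →+ EReal) _ _
      rw [hcast, pathWeight,
        ← Fin.sum_univ_eq_sum_range (fun t => ((G t - G (t + 1) : ℝ) : EReal)) r]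
      refine Finset.sum_le_sum fun t _ => ?_
      have e1 : (⟨min (t.val) r, by omega⟩ : Fin (r + 1)) = t.castSucc := by
        apply Fin.ext
        simp only [Fin.coe_castSucc]
        omega
      have e2 : (⟨min (t.val + 1) r, by omega⟩ : Fin (r + 1)) = t.succ := by
        apply Fin.ext
        simp only [Fin.val_succ]
        omega
      have : G t.val - G (t.val + 1) = x (p t.castSucc) - x (p t.succ) := by
        rw [hG]
        simp only [e1, e2]
      rw [this]
      exact harc t
    have htel : (∑ t ∈ Finset.range r, (G t - G (t + 1)) : ℝ) = 0 := by
      rw [Finset.sum_range_sub' G r]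
      have h0 : (⟨min 0 r, by omega⟩ : Fin (r + 1)) = 0 := by
        apply Fin.ext
        simp only [Fin.val_zero]
        omega
      have hl : (⟨min r r, by omega⟩ : Fin (r + 1)) = Fin.last r := by
        apply Fin.ext
        simp only [Fin.val_last]
        omega
      have e0 : G 0 = x (p 0) := by rw [hG]; simp only [h0]
      have er : G r = x (p (Fin.last r)) := by rw [hG]; simp only [hl]
      rw [e0, er, hcirc, sub_self]
    rw [htel] at hsum
    exact_mod_cast hsum
  · intro hnpc
    have hC := MaxPlusAux.natNoPos M hnpc
    refine ⟨fun i => (MaxPlusAux.g M n i).toReal, fun i => ?_⟩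
    have hcoe : ∀ j, ((MaxPlusAux.g M n j).toReal : EReal) = MaxPlusAux.g M n j :=
      fun j => EReal.coe_toReal (MaxPlusAux.g_ne_top M hM n j) (MaxPlusAux.g_ne_bot M n j)
    rw [hcoe i, mpVec]
    refine iSup_le fun j => ?_
    rw [hcoe j]
    rcases eq_or_ne (M i j) ⊥ with hbot | hne
    · rw [hbot, EReal.bot_add]
      exact bot_le
    · obtain ⟨r, hr, p, hP, hp0, heq⟩ := MaxPlusAux.exists_W_eq M n j
      set q : ℕ → Fin n := fun t => Nat.casesOn t i (fun s => p s) with hqdef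
      have hWq : MaxPlusAux.W M (r + 1) q = M i j + MaxPlusAux.W M r p := by
        rw [MaxPlusAux.W, Finset.sum_range_succ']
        show (∑ k ∈ Finset.range r, M (p k) (p (k + 1))) + M i (p 0)
          = M i j + MaxPlusAux.W M r p
        rw [hp0]
        exact add_comm _ _
      have hPq : MaxPlusAux.P M (r + 1) q := by
        intro t ht
        cases t with
        | zero => show M i (p 0) ≠ ⊥; rw [hp0]; exact hne
        | succ s => exact hP s (by omega)
      calc M i j + MaxPlusAux.g M n j = M i j + MaxPlusAux.W M r p := by rw [heq]
        _ = MaxPlusAux.W M (r + 1) q := hWq.symm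
        _ ≤ MaxPlusAux.g M n (q 0) := MaxPlusAux.W_le_g_n M hC (r + 1) q hPq
        _ = MaxPlusAux.g M n i := rfl
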